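/- For any integers n, m ≥ 4 there exists an oriented graph G = (V, E) with |V| = n and |E| = m such that η(G) ≥ 2⁻¹⁴ · (min(|V|², |E|) · min(|V|, |E|) + |E|). -/

import Mathlib

/-- An oriented graph: finite nonempty sets of vertices and edges with
origin and tail maps. -/
structure OrientedGraph where
  V : Type
  E : Type
  [fintypeV : Fintype V]
  [fintypeE : Fintype E]
  [nonemptyV : Nonempty V]
  [nonemptyE : Nonempty E]
  o : E → V
  t : E → V

attribute [instance] OrientedGraph.fintypeV OrientedGraph.fintypeE
  OrientedGraph.nonemptyV OrientedGraph.nonemptyE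

namespace OrientedGraph

variable (G : OrientedGraph)

/-- `G.IsPath p u v` : the edge sequence `p` is a path from `u` to `v`
(consecutive edges are composable; paths of length 0 at any vertex are allowed). -/
def IsPath (p : List G.E) (u v : G.V) : Prop :=
  List.Chain' (fun e f => G.t e = G.o f) p ∧
  ((p = [] ∧ u = v) ∨
    ∃ h : p ≠ [], u = G.o (p.head h) ∧ v = G.t (p.getLast h))

/-- The label of an edge sequence: the product of the labels of its edges
(the empty sequence maps to `1`). -/
def labelProd {M : Type} [Monoid M] (l : G.E → M) (s : List G.E) : M :=
  (s.map l).prod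

/-- The diagram `(G, l)` is commutative: any two paths with the same origin and
the same tail have equal labels. -/
def IsCommutative {M : Type} [Monoid M] (l : G.E → M) : Prop :=
  ∀ (u v : G.V) (p₁ p₂ : List G.E),
    G.IsPath p₁ u v → G.IsPath p₂ u v → G.labelProd l p₁ = G.labelProd l p₂

/-- A complete system of relations for `G`: for every monoid `M` and every
labeling `l : E → M`, the diagram `(G, l)` is commutative iff all relations hold. -/
def IsComplete (R : Finset (List G.E × List G.E)) : Prop :=
  ∀ (M : Type) [Monoid M], ∀ l : G.E → M,
    G.IsCommutative l ↔ ∀ r ∈ R, G.labelProd l r.1 = G.labelProd l r.2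

/-- A minimal complete system of relations: no proper subset is complete. -/
def IsMinimalComplete (R : Finset (List G.E × List G.E)) : Prop :=
  G.IsComplete R ∧ ∀ R' : Finset (List G.E × List G.E), R' ⊂ R → ¬ G.IsComplete R'

/-- The commutativity rank `η(G)`: the minimal cardinality of a complete
system of relations for `G`. -/
noncomputable def eta : ℕ :=
  sInf {n : ℕ | ∃ R : Finset (List G.E × List G.E), G.IsComplete R ∧ R.card = n}

/-- `S'` is obtained from `S` by one multiplication. -/
def MulStep (S S' : Set (List G.E)) : Prop :=
  ∃ s ∈ S, ∃ s' ∈ S, S' = S ∪ {s ++ s'}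

/-- `G.mCost S S'` : the minimal number of multiplications needed to obtain `S'`
from `S` (`⊤` if impossible). -/
noncomputable def mCost (S S' : Set (List G.E)) : ℕ∞ :=
  sInf {k : ℕ∞ | ∃ n : ℕ, k = n ∧ ∃ f : ℕ → Set (List G.E),
    f 0 = S ∧ f n = S' ∧ ∀ i < n, G.MulStep (f i) (f (i + 1))}

/-- `S_R`: the set of all edge sequences appearing in the relations of `R`. -/
def relSet (R : Finset (List G.E × List G.E)) : Set (List G.E) :=
  {s | ∃ r ∈ R, s = r.1 ∨ s = r.2}

/-- `ℰ`: the empty sequence together with all one-edge sequences. -/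
def baseSet : Set (List G.E) :=
  {s | s = [] ∨ ∃ e : G.E, s = [e]}

/-- `m(R)`: the minimal number of multiplications needed to build all sequences
appearing in `R`, starting from `ℰ`. -/
noncomputable def mRel (R : Finset (List G.E × List G.E)) : ℕ∞ :=
  sInf {k : ℕ∞ | ∃ S : Set (List G.E), G.relSet R ⊆ S ∧ k = G.mCost G.baseSet S}

/-- The multiplication rank `ν(G)`. -/
noncomputable def nu : ℕ∞ :=
  sInf {k : ℕ∞ | ∃ R : Finset (List G.E × List G.E), G.IsComplete R ∧ k = G.mRel R}

/-- A 4-tuple of edges `(a, b, c, d)` forms a rhomboid. -/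
def IsRhomboid (r : G.E × G.E × G.E × G.E) : Prop :=
  G.o r.1 = G.o r.2.2.1 ∧ G.t r.2.1 = G.t r.2.2.2 ∧
  G.t r.1 = G.o r.2.1 ∧ G.t r.2.2.1 = G.o r.2.2.2 ∧
  G.o r.1 ≠ G.t r.1 ∧ G.o r.1 ≠ G.o r.2.2.2 ∧ G.o r.1 ≠ G.t r.2.2.2 ∧
  G.t r.1 ≠ G.o r.2.2.2 ∧ G.t r.1 ≠ G.t r.2.2.2 ∧ G.o r.2.2.2 ≠ G.t r.2.2.2

/-- Two rhomboids `(a, b, c, d)` and `(a', b', c', d')` are disjoint. -/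
def RhDisjoint (r r' : G.E × G.E × G.E × G.E) : Prop :=
  (r.1 ≠ r'.1 ∨ r.2.1 ≠ r'.2.1) ∧
  (r.1 ≠ r'.2.2.1 ∨ r.2.1 ≠ r'.2.2.2) ∧
  (r.2.2.1 ≠ r'.2.2.1 ∨ r.2.2.2 ≠ r'.2.2.2) ∧
  (r.2.2.1 ≠ r'.1 ∨ r.2.2.2 ≠ r'.2.1)

/-- `𝔯𝔥(G)`: the maximal cardinality of a family of pairwise disjoint rhomboids in `G`. -/
noncomputable def rhNum : ℕ :=
  sSup {n : ℕ | ∃ F : Finset (G.E × G.E × G.E × G.E),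
    (∀ r ∈ F, G.IsRhomboid r) ∧
    (∀ r ∈ F, ∀ r' ∈ F, r ≠ r' → G.RhDisjoint r r') ∧ F.card = n}

/-- `𝔏(G)`: the number of loops of `G`. -/
noncomputable def loopCount : ℕ :=
  Nat.card {e : G.E // G.o e = G.t e}

/-- `G` is quasi-acyclic: no directed cycle visiting two or more distinct vertices. -/
def QuasiAcyclic : Prop :=
  ∀ u v : G.V, u ≠ v →
    ∀ p q : List G.E, G.IsPath p u v → G.IsPath q v u → False

/-- `G` is 2-path-bounded: every oriented path avoiding loop edges has length at most 2. -/
def TwoPathBounded : Prop :=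
  ∀ (p : List G.E) (u v : G.V), G.IsPath p u v →
    (∀ e ∈ p, G.o e ≠ G.t e) → p.length ≤ 2

/-- `G` has a pair of multiple edges. -/
def HasMultipleEdges : Prop :=
  ∃ e e' : G.E, e ≠ e' ∧ G.t e = G.t e' ∧ G.o e = G.o e' ∧ G.t e ≠ G.o e

/-- `G` has a triangle. -/
def HasTriangle : Prop :=
  ∃ a b c : G.E, G.o a = G.o b ∧ G.t b = G.o c ∧ G.t c = G.t a ∧
    G.o a ≠ G.t a ∧ G.o b ≠ G.t b ∧ G.o c ≠ G.t c

/-- `G` has no loops. -/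
def NoLoops : Prop := ∀ e : G.E, G.o e ≠ G.t e

/-- Every edge occurring on either side of the relation `r` is a loop. -/
def AllLoops (r : List G.E × List G.E) : Prop :=
  (∀ e ∈ r.1, G.o e = G.t e) ∧ (∀ e ∈ r.2, G.o e = G.t e)

/-- Both sides of the relation `r` contain at least one non-loop edge. -/
def BothSidesNonLoop (r : List G.E × List G.E) : Prop :=
  (∃ e ∈ r.1, G.o e ≠ G.t e) ∧ (∃ e ∈ r.2, G.o e ≠ G.t e)

end OrientedGraph

/-- The triploid `T(n₁, n₂, n₃, n₀, e)`. -/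
def Triploid (n₁ n₂ n₃ n₀ e : ℕ) (hn₁ : 0 < n₁) (he : n₂ * (n₁ + n₃) ≤ e)
    (he₀ : 0 < e) : OrientedGraph where
  V := Fin n₀ ⊕ Fin n₁ ⊕ Fin n₂ ⊕ Fin n₃
  E := (Fin n₁ × Fin n₂) ⊕ (Fin n₂ × Fin n₃) ⊕ Fin (e - n₂ * (n₁ + n₃))
  nonemptyV := ⟨Sum.inr (Sum.inl ⟨0, hn₁⟩)⟩
  nonemptyE := by
    by_cases h : n₂ * (n₁ + n₃) < e
    · exact ⟨Sum.inr (Sum.inr ⟨0, by omega⟩)⟩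
    · have h2 : 0 < n₂ := by
        rcases Nat.eq_zero_or_pos n₂ with h0 | h0
        · exfalso; subst h0; simp at h; omega
        · exact h0
      exact ⟨Sum.inl (⟨0, hn₁⟩, ⟨0, h2⟩)⟩
  o := Sum.elim (fun p => Sum.inr (Sum.inl p.1))
        (Sum.elim (fun p => Sum.inr (Sum.inr (Sum.inl p.1)))
          (fun _ => Sum.inr (Sum.inl ⟨0, hn₁⟩)))
  t := Sum.elim (fun p => Sum.inr (Sum.inr (Sum.inl p.2)))
        (Sum.elim (fun p => Sum.inr (Sum.inr (Sum.inr p.2)))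
          (fun _ => Sum.inr (Sum.inl ⟨0, hn₁⟩)))


namespace TriProof

/-- Adjacency monoid: tracks first-letter data, last-letter data, and a `ZMod 2`
accumulator fed by adjacent pairs through `κ`. -/
structure AdjM (S₁ S₂ : Type) (κ : S₂ → S₁ → ZMod 2) : Type where
  val : Option (S₁ × S₂ × ZMod 2)

namespace AdjM

variable {S₁ S₂ : Type} {κ : S₂ → S₁ → ZMod 2}

def amul : AdjM S₁ S₂ κ → AdjM S₁ S₂ κ → AdjM S₁ S₂ κ
  | ⟨none⟩, y => y
  | x, ⟨none⟩ => x
  | ⟨some (f, a, z)⟩, ⟨some (f', a', z')⟩ => ⟨some (f, a', z + z' + κ a f')⟩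

instance : Monoid (AdjM S₁ S₂ κ) where
  one := ⟨none⟩
  mul := amul
  one_mul x := by rcases x with ⟨_ | ⟨f, a, z⟩⟩ <;> rfl
  mul_one x := by rcases x with ⟨_ | ⟨f, a, z⟩⟩ <;> rfl
  mul_assoc a b c := by
    rcases a with ⟨_ | ⟨f₁, l₁, z₁⟩⟩ <;> rcases b with ⟨_ | ⟨f₂, l₂, z₂⟩⟩ <;>
      rcases c with ⟨_ | ⟨f₃, l₃, z₃⟩⟩ <;> try rfl
    show amul (amul _ _) _ = amul _ (amul _ _)
    simp only [amul, AdjM.mk.injEq, Option.some.injEq, Prod.mk.injEq, true_and]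
    ring

/-- A non-identity element of the adjacency monoid. -/
def el (f : S₁) (a : S₂) (z : ZMod 2) : AdjM S₁ S₂ κ := ⟨some (f, a, z)⟩

@[simp] lemma el_mul_el (f f' : S₁) (a a' : S₂) (z z' : ZMod 2) :
    (el f a z : AdjM S₁ S₂ κ) * el f' a' z' = el f a' (z + z' + κ a f') := rfl

@[simp] lemma el_inj (f f' : S₁) (a a' : S₂) (z z' : ZMod 2) :
    (el f a z : AdjM S₁ S₂ κ) = el f' a' z' ↔ f = f' ∧ a = a' ∧ z = z' := by
  simp [el, AdjM.mk.injEq]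

@[simp] lemma el_ne_one (f : S₁) (a : S₂) (z : ZMod 2) :
    (el f a z : AdjM S₁ S₂ κ) ≠ 1 := by
  simp only [el, ne_eq]
  intro h
  exact Option.some_ne_none _ (congrArg AdjM.val h)

end AdjM

lemma prod_ofAdd {α : Type} (g : α → ZMod 2) (s : List α) :
    (s.map (fun e => Multiplicative.ofAdd (g e))).prod =
      Multiplicative.ofAdd ((s.map g).sum) := by
  induction s with
  | nil => rfl
  | cons e t ih => simp [ih]

section Raw

variable {n₁ n₂ n₃ : ℕ} {γ : Type}

/-- `true` on non-loop edges. -/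
def nL : (Fin n₁ × Fin n₂) ⊕ ((Fin n₂ × Fin n₃) ⊕ γ) → Bool
  | .inr (.inr _) => false
  | _ => true


@[simp] lemma nL_a {n₁ n₂ n₃ : ℕ} {γ : Type} (x : Fin n₁ × Fin n₂) :
    nL (Sum.inl x : (Fin n₁ × Fin n₂) ⊕ ((Fin n₂ × Fin n₃) ⊕ γ)) = true := rfl
@[simp] lemma nL_b {n₁ n₂ n₃ : ℕ} {γ : Type} (x : Fin n₂ × Fin n₃) :
    nL (Sum.inr (Sum.inl x) : (Fin n₁ × Fin n₂) ⊕ ((Fin n₂ × Fin n₃) ⊕ γ)) = true := rfl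
@[simp] lemma nL_lp {n₁ n₂ n₃ : ℕ} {γ : Type} (x : γ) :
    nL (Sum.inr (Sum.inr x) : (Fin n₁ × Fin n₂) ⊕ ((Fin n₂ × Fin n₃) ⊕ γ)) = false := rfl

/-- first-letter data -/
def fd : (Fin n₁ × Fin n₂) ⊕ ((Fin n₂ × Fin n₃) ⊕ γ) → Option (Fin n₁ ⊕ (Fin n₂ × Fin n₃))
  | .inl (i, _) => some (.inl i)
  | .inr (.inl x) => some (.inr x)
  | .inr (.inr _) => none

/-- last-letter data -/
def ld : (Fin n₁ × Fin n₂) ⊕ ((Fin n₂ × Fin n₃) ⊕ γ) → Option ((Fin n₁ × Fin n₂) ⊕ Fin n₃)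
  | .inl x => some (.inl x)
  | .inr (.inl (_, k)) => some (.inr k)
  | .inr (.inr _) => none

/-- the pairing on adjacent data, parametrized by `φ`. -/
def κφ (φ : Fin n₁ × Fin n₃ × Fin n₂ → ZMod 2) :
    Option ((Fin n₁ × Fin n₂) ⊕ Fin n₃) → Option (Fin n₁ ⊕ (Fin n₂ × Fin n₃)) → ZMod 2
  | some (.inl (i, j)), some (.inr (j', k)) => if j = j' then φ (i, k, j) else 0
  | _, _ => 0

/-- the adjacency-monoid labeling associated with `φ`. -/
def lab1 (φ : Fin n₁ × Fin n₃ × Fin n₂ → ZMod 2) :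
    (Fin n₁ × Fin n₂) ⊕ ((Fin n₂ × Fin n₃) ⊕ γ) →
      AdjM (Option (Fin n₁ ⊕ (Fin n₂ × Fin n₃))) (Option ((Fin n₁ × Fin n₂) ⊕ Fin n₃)) (κφ φ)
  | .inl x => AdjM.el (some (.inl x.1)) (some (.inl x)) 0
  | .inr (.inl x) => AdjM.el (some (.inr x)) (some (.inr x.2)) 0
  | .inr (.inr _) => 1

lemma lab1_eq (φ : Fin n₁ × Fin n₃ × Fin n₂ → ZMod 2)
    (e : (Fin n₁ × Fin n₂) ⊕ ((Fin n₂ × Fin n₃) ⊕ γ)) (he : nL e = true) :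
    lab1 φ e = AdjM.el (fd e) (ld e) 0 := by
  rcases e with x | x | x <;> first | rfl | simp [nL] at he

lemma lab1_loop (φ : Fin n₁ × Fin n₃ × Fin n₂ → ZMod 2)
    (e : (Fin n₁ × Fin n₂) ⊕ ((Fin n₂ × Fin n₃) ⊕ γ)) (he : ¬ (nL e = true)) :
    lab1 φ e = 1 := by
  rcases e with x | x | x <;> first | rfl | simp [nL] at he

/-- sum of `κφ` over adjacent pairs. -/
def adjSum (φ : Fin n₁ × Fin n₃ × Fin n₂ → ZMod 2) :
    List ((Fin n₁ × Fin n₂) ⊕ ((Fin n₂ × Fin n₃) ⊕ γ)) → ZMod 2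
  | [] => 0
  | [_] => 0
  | e :: f :: r => κφ φ (ld e) (fd f) + adjSum φ (f :: r)

lemma κφ_add (φ ψ : Fin n₁ × Fin n₃ × Fin n₂ → ZMod 2) (x y) :
    κφ (φ + ψ) x y = κφ φ x y + κφ ψ x y := by
  rcases x with _ | (⟨i, j⟩ | k) <;> rcases y with _ | (i' | ⟨j', k'⟩) <;>
      simp only [κφ, add_zero] <;> split <;> simp

lemma κφ_smul (c : ZMod 2) (φ : Fin n₁ × Fin n₃ × Fin n₂ → ZMod 2) (x y) :
    κφ (c • φ) x y = c * κφ φ x y := by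
  rcases x with _ | (⟨i, j⟩ | k) <;> rcases y with _ | (i' | ⟨j', k'⟩) <;>
      simp only [κφ, mul_zero] <;> split <;> simp

lemma κφ_zero (x y) : κφ (0 : Fin n₁ × Fin n₃ × Fin n₂ → ZMod 2) x y = 0 := by
  rcases x with _ | (⟨i, j⟩ | k) <;> rcases y with _ | (i' | ⟨j', k'⟩) <;>
      simp only [κφ] <;> split <;> simp

lemma adjSum_add (φ ψ : Fin n₁ × Fin n₃ × Fin n₂ → ZMod 2)
    (s : List ((Fin n₁ × Fin n₂) ⊕ ((Fin n₂ × Fin n₃) ⊕ γ))) :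
    adjSum (φ + ψ) s = adjSum φ s + adjSum ψ s := by
  induction s with
  | nil => simp [adjSum]
  | cons e t ih =>
    cases t with
    | nil => simp [adjSum]
    | cons f r =>
      simp only [adjSum, κφ_add] at ih ⊢
      rw [ih]
      ring

lemma adjSum_smul (c : ZMod 2) (φ : Fin n₁ × Fin n₃ × Fin n₂ → ZMod 2)
    (s : List ((Fin n₁ × Fin n₂) ⊕ ((Fin n₂ × Fin n₃) ⊕ γ))) :
    adjSum (c • φ) s = c * adjSum φ s := by
  induction s with
  | nil => simp [adjSum]
  | cons e t ih =>
    cases t with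
    | nil => simp [adjSum]
    | cons f r =>
      simp only [adjSum, κφ_smul] at ih ⊢
      rw [ih]
      ring

lemma adjSum_zero (s : List ((Fin n₁ × Fin n₂) ⊕ ((Fin n₂ × Fin n₃) ⊕ γ))) :
    adjSum (0 : Fin n₁ × Fin n₃ × Fin n₂ → ZMod 2) s = 0 := by
  induction s with
  | nil => simp [adjSum]
  | cons e t ih =>
    cases t with
    | nil => simp [adjSum]
    | cons f r => simp only [adjSum, κφ_zero, ih, add_zero, zero_add]

lemma prod_lab1 (φ : Fin n₁ × Fin n₃ × Fin n₂ → ZMod 2)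
    (s : List ((Fin n₁ × Fin n₂) ⊕ ((Fin n₂ × Fin n₃) ⊕ γ)))
    (hs : ∀ e ∈ s, nL e = true) (h : s ≠ []) :
    (s.map (lab1 φ)).prod = AdjM.el (fd (s.head h)) (ld (s.getLast h)) (adjSum φ s) := by
  induction s with
  | nil => exact absurd rfl h
  | cons e t ih =>
    cases t with
    | nil =>
      simp only [List.map_cons, List.map_nil, List.prod_cons, List.prod_nil, mul_one]
      rw [lab1_eq φ e (hs e (by simp))]
      rfl
    | cons f r =>
      have ht : (f :: r : List _) ≠ [] := by simp
      have key := ih (fun x hx => hs x (List.mem_cons_of_mem _ hx)) ht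
      simp only [List.map_cons, List.prod_cons] at key ⊢
      rw [lab1_eq φ e (hs e (by simp)), key, AdjM.el_mul_el]
      have hlast : (e :: f :: r).getLast (by simp) = (f :: r).getLast ht :=
        List.getLast_cons ht
      rw [List.head_cons, hlast]
      simp only [AdjM.el_inj, adjSum]
      refine ⟨?_, ?_, ?_⟩ <;> first | rfl | trivial | ring

lemma prod_lab1_filter (φ : Fin n₁ × Fin n₃ × Fin n₂ → ZMod 2)
    (s : List ((Fin n₁ × Fin n₂) ⊕ ((Fin n₂ × Fin n₃) ⊕ γ))) :
    (s.map (lab1 φ)).prod = ((s.filter nL).map (lab1 φ)).prod := by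
  induction s with
  | nil => rfl
  | cons e t ih =>
    by_cases he : nL e = true
    · rw [List.filter_cons_of_pos he]
      simp only [List.map_cons, List.prod_cons, ih]
    · rw [List.filter_cons_of_neg he]
      simp only [List.map_cons, List.prod_cons, lab1_loop φ e he, one_mul, ih]

end Raw
end TriProof

namespace TriProof

section Graph

variable {n₁ n₂ n₃ n₀ m : ℕ} (hn₁ : 0 < n₁) (hm' : n₂ * (n₁ + n₃) ≤ m) (hm0 : 0 < m)

local notation "GG" => Triploid n₁ n₂ n₃ n₀ m hn₁ hm' hm0

@[simp] lemma o_a (i : Fin n₁) (j : Fin n₂) :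
    (GG).o (Sum.inl (i, j)) = Sum.inr (Sum.inl i) := rfl
@[simp] lemma t_a (i : Fin n₁) (j : Fin n₂) :
    (GG).t (Sum.inl (i, j)) = Sum.inr (Sum.inr (Sum.inl j)) := rfl
@[simp] lemma o_b (j : Fin n₂) (k : Fin n₃) :
    (GG).o (Sum.inr (Sum.inl (j, k))) = Sum.inr (Sum.inr (Sum.inl j)) := rfl
@[simp] lemma t_b (j : Fin n₂) (k : Fin n₃) :
    (GG).t (Sum.inr (Sum.inl (j, k))) = Sum.inr (Sum.inr (Sum.inr k)) := rfl
@[simp] lemma o_loop (x : Fin (m - n₂ * (n₁ + n₃))) :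
    (GG).o (Sum.inr (Sum.inr x)) = Sum.inr (Sum.inl ⟨0, hn₁⟩) := rfl
@[simp] lemma t_loop (x : Fin (m - n₂ * (n₁ + n₃))) :
    (GG).t (Sum.inr (Sum.inr x)) = Sum.inr (Sum.inl ⟨0, hn₁⟩) := rfl

lemma loop_of_nL_false {e : (GG).E} (he : nL e = false) :
    ∃ x, e = Sum.inr (Sum.inr x) := by
  rcases e with x | x | x <;> first | exact ⟨x, rfl⟩ | simp at he

lemma vU_inj {i i' : Fin n₁} (h : (Sum.inr (Sum.inl i) : (GG).V) = Sum.inr (Sum.inl i')) :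
    i = i' := Sum.inl.inj (Sum.inr.inj h)
lemma vV_inj {j j' : Fin n₂}
    (h : (Sum.inr (Sum.inr (Sum.inl j)) : (GG).V) = Sum.inr (Sum.inr (Sum.inl j'))) :
    j = j' := Sum.inl.inj (Sum.inr.inj (Sum.inr.inj h))
lemma vW_inj {k k' : Fin n₃}
    (h : (Sum.inr (Sum.inr (Sum.inr k)) : (GG).V) = Sum.inr (Sum.inr (Sum.inr k'))) :
    k = k' := Sum.inr.inj (Sum.inr.inj (Sum.inr.inj h))
lemma vV_ne_vU {j : Fin n₂} {i : Fin n₁}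
    (h : (Sum.inr (Sum.inr (Sum.inl j)) : (GG).V) = Sum.inr (Sum.inl i)) : False :=
  nomatch h
lemma vU_ne_vV {j : Fin n₂} {i : Fin n₁}
    (h : (Sum.inr (Sum.inl i) : (GG).V) = Sum.inr (Sum.inr (Sum.inl j))) : False :=
  nomatch h
lemma vW_ne_vU {k : Fin n₃} {i : Fin n₁}
    (h : (Sum.inr (Sum.inr (Sum.inr k)) : (GG).V) = Sum.inr (Sum.inl i)) : False :=
  nomatch h
lemma vW_ne_vV {k : Fin n₃} {j : Fin n₂}
    (h : (Sum.inr (Sum.inr (Sum.inr k)) : (GG).V) = Sum.inr (Sum.inr (Sum.inl j))) : False :=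
  nomatch h
lemma vU_ne_vW {k : Fin n₃} {i : Fin n₁}
    (h : (Sum.inr (Sum.inl i) : (GG).V) = Sum.inr (Sum.inr (Sum.inr k))) : False :=
  nomatch h
lemma vV_ne_vW {k : Fin n₃} {j : Fin n₂}
    (h : (Sum.inr (Sum.inr (Sum.inl j)) : (GG).V) = Sum.inr (Sum.inr (Sum.inr k))) : False :=
  nomatch h

lemma chain_classify (p : List (GG).E)
    (hp : List.Chain' (fun e f => (GG).t e = (GG).o f) p) :
    (∀ e ∈ p, nL e = false) ∨
    (∃ (lp : List (GG).E) (i : Fin n₁) (j : Fin n₂),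
      (∀ e ∈ lp, nL e = false) ∧ (lp ≠ [] → i = ⟨0, hn₁⟩) ∧
      (p = lp ++ ([Sum.inl (i, j)] : List (GG).E) ∨
        ∃ k : Fin n₃, p = lp ++ ([Sum.inl (i, j), Sum.inr (Sum.inl (j, k))] : List (GG).E))) ∨
    (∃ (j : Fin n₂) (k : Fin n₃), p = ([Sum.inr (Sum.inl (j, k))] : List (GG).E)) := by
  induction p with
  | nil => exact Or.inl (by simp)
  | cons e p ih =>
    have hp' : List.Chain' (fun e f => (GG).t e = (GG).o f) p :=
      (List.isChain_cons.mp hp).2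
    have hhead : ∀ f ∈ p.head?, (GG).t e = (GG).o f := (List.isChain_cons.mp hp).1
    cases p with
    | nil =>
      rcases e with ⟨i, j⟩ | ⟨j, k⟩ | x
      · exact Or.inr (Or.inl ⟨[], i, j, by simp, by simp, Or.inl rfl⟩)
      · exact Or.inr (Or.inr ⟨j, k, rfl⟩)
      · exact Or.inl (fun e he => by have he' := List.mem_singleton.mp he; subst he'; rfl)
    | cons f r =>
      have hef : (GG).t e = (GG).o f := hhead f rfl
      rcases e with ⟨i, j⟩ | ⟨j, k⟩ | x
      · -- e is an a-edge; f must be a matching b-edge and r = []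
        have hf : ∃ k : Fin n₃, f = Sum.inr (Sum.inl (j, k)) := by
          rcases f with ⟨i', j'⟩ | ⟨j', k'⟩ | x'
          · exact absurd hef (fun h => vV_ne_vU h)
          · have : j = j' := vV_inj hef
            exact ⟨k', by rw [this]⟩
          · exact absurd hef (fun h => vV_ne_vU h)
        obtain ⟨k, rfl⟩ := hf
        have hr : r = [] := by
          rcases ih hp' with hall | ⟨lp, i', j', hlp, hi', hcase⟩ | ⟨j', k', heq⟩
          · have := hall _ List.mem_cons_self
            rw [nL_b] at this
            exact Bool.noConfusion this
          · rcases hcase with heq | ⟨k'', heq⟩ <;>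
            · cases lp with
              | nil =>
                simp only [List.nil_append] at heq
                injection heq with h1 h2
                all_goals exact nomatch h1
              | cons g lgs =>
                have hg := hlp g List.mem_cons_self
                have hgb : (Sum.inr (Sum.inl (j, k)) : (GG).E) = g := by
                  have := congrArg (fun l => l.head?) heq
                  simp only [List.cons_append, List.head?_cons] at this
                  exact Option.some.inj this
                rw [← hgb] at hg
                simp at hg
          · injection heq with h1 h2
            try exact h2
        subst hr
        exact Or.inr (Or.inl ⟨[], i, j, by simp, by simp, Or.inr ⟨k, rfl⟩⟩)
      · -- e is a b-edge: nothing can follow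
        exfalso
        rcases f with ⟨i', j'⟩ | ⟨j', k'⟩ | x'
        · exact vW_ne_vU hef
        · exact vW_ne_vV hef
        · exact vW_ne_vU hef
      · -- e is a loop
        have hf : (∃ y, f = Sum.inr (Sum.inr y)) ∨
            ∃ j' : Fin n₂, f = Sum.inl (⟨0, hn₁⟩, j') := by
          rcases f with ⟨i', j'⟩ | ⟨j', k'⟩ | x'
          · right
            have : (⟨0, hn₁⟩ : Fin n₁) = i' := vU_inj hef
            exact ⟨j', by rw [this]⟩
          · exact absurd hef (fun h => vU_ne_vV h)
          · exact Or.inl ⟨x', rfl⟩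
        rcases ih hp' with hall | ⟨lp, i', j', hlp, hi', hcase⟩ | ⟨j', k', heq⟩
        · refine Or.inl ?_
          intro e' he'
          rcases List.mem_cons.mp he' with rfl | h
          · rfl
          · exact hall _ h
        · refine Or.inr (Or.inl ⟨Sum.inr (Sum.inr x) :: lp, i', j', ?_, ?_, ?_⟩)
          · intro e' he'
            rcases List.mem_cons.mp he' with rfl | h
            · rfl
            · exact hlp _ h
          · intro _
            cases lp with
            | nil =>
              rcases hcase with heq | ⟨k'', heq⟩ <;>
              · simp only [List.nil_append] at heq
                injection heq with h1 h2
                rcases hf with ⟨y, hy⟩ | ⟨j'', hj⟩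
                · rw [hy] at h1
                  exact nomatch h1
                · rw [hj] at h1
                  have h4 : ((⟨0, hn₁⟩ : Fin n₁), j'') = (i', j') := Sum.inl.inj h1
                  exact (congrArg Prod.fst h4).symm
            | cons g lgs => exact hi' (by simp)
          · rcases hcase with heq | ⟨k'', heq⟩
            · exact Or.inl (by rw [heq]; rfl)
            · exact Or.inr ⟨k'', by rw [heq]; rfl⟩
        · exfalso
          injection heq with h1 h2
          rcases hf with ⟨y, hy⟩ | ⟨j'', hj⟩
          · rw [hy] at h1
            exact nomatch h1
          · rw [hj] at h1
            exact nomatch h1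

lemma getLast_app {α : Type} (l : List α) (a : α) (h : l ++ [a] ≠ []) :
    (l ++ [a]).getLast h = a :=
  (List.getLast_append_of_ne_nil (l := l) h (by simp)).trans rfl

lemma getLast_app2 {α : Type} (l : List α) (a b : α) (h : l ++ [a, b] ≠ []) :
    (l ++ [a, b]).getLast h = b :=
  (List.getLast_append_of_ne_nil (l := l) h (by simp)).trans rfl

lemma path_label {M : Type} [Monoid M] (l : (GG).E → M)
    (ha : ∀ x, l (Sum.inr (Sum.inr x)) = 1)
    {p : List (GG).E} {u v : (GG).V} (hp : (GG).IsPath p u v) :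
    (u = v ∧ (GG).labelProd l p = 1) ∨
    (∃ i j, u = Sum.inr (Sum.inl i) ∧ v = Sum.inr (Sum.inr (Sum.inl j)) ∧
      (GG).labelProd l p = l (Sum.inl (i, j))) ∨
    (∃ i k j, u = Sum.inr (Sum.inl i) ∧ v = Sum.inr (Sum.inr (Sum.inr k)) ∧
      (GG).labelProd l p = l (Sum.inl (i, j)) * l (Sum.inr (Sum.inl (j, k)))) ∨
    (∃ j k, u = Sum.inr (Sum.inr (Sum.inl j)) ∧ v = Sum.inr (Sum.inr (Sum.inr k)) ∧
      (GG).labelProd l p = l (Sum.inr (Sum.inl (j, k)))) := by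
  obtain ⟨hchain, hends⟩ := hp
  have prod_loops : ∀ (s : List (GG).E), (∀ e ∈ s, nL e = false) →
      (GG).labelProd l s = 1 := by
    intro s hs
    apply List.prod_eq_one
    intro x hx
    obtain ⟨e, he, rfl⟩ := List.mem_map.mp hx
    obtain ⟨y, rfl⟩ := loop_of_nL_false hn₁ hm' hm0 (hs e he)
    exact ha y
  rcases chain_classify hn₁ hm' hm0 p hchain with
    hall | ⟨lp, i, j, hlp, hi, hcase⟩ | ⟨j, k, rfl⟩
  · -- all loops
    left
    rcases hends with ⟨_, rfl⟩ | ⟨hne, hu, hv⟩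
    · exact ⟨rfl, prod_loops p hall⟩
    · refine ⟨?_, prod_loops p hall⟩
      obtain ⟨y1, hy1⟩ := loop_of_nL_false hn₁ hm' hm0 (hall _ (List.head_mem hne))
      obtain ⟨y2, hy2⟩ := loop_of_nL_false hn₁ hm' hm0 (hall _ (List.getLast_mem hne))
      rw [hu, hv, hy1, hy2]
      rfl
  · -- a-path or ab-path, possibly after loops
    rcases hcase with rfl | ⟨k, rfl⟩
    · -- p = lp ++ [a(i,j)]
      rcases hends with ⟨habs, _⟩ | ⟨hne, hu, hv⟩
      · simp at habs
      · right; left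
        refine ⟨i, j, ?_, ?_, ?_⟩
        · cases lp with
          | nil => exact hu
          | cons g lgs =>
            obtain ⟨y, hy⟩ := loop_of_nL_false hn₁ hm' hm0 (hlp g List.mem_cons_self)
            have h2 : u = (GG).o g := hu
            rw [hi (by simp), h2, hy]
            rfl
        · have hgl : (lp ++ ([Sum.inl (i, j)] : List (GG).E)).getLast hne = Sum.inl (i, j) :=
            getLast_app _ _ _
          rw [hv, hgl]
          rfl
        · show ((lp ++ ([Sum.inl (i, j)] : List (GG).E)).map l).prod = _
          rw [List.map_append, List.prod_append]
          have h1 : (lp.map l).prod = 1 := prod_loops lp hlp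
          rw [h1, one_mul]
          exact mul_one _
    · -- p = lp ++ [a(i,j), b(j,k)]
      rcases hends with ⟨habs, _⟩ | ⟨hne, hu, hv⟩
      · simp at habs
      · right; right; left
        refine ⟨i, k, j, ?_, ?_, ?_⟩
        · cases lp with
          | nil => exact hu
          | cons g lgs =>
            obtain ⟨y, hy⟩ := loop_of_nL_false hn₁ hm' hm0 (hlp g List.mem_cons_self)
            have h2 : u = (GG).o g := hu
            rw [hi (by simp), h2, hy]
            rfl
        · have hgl : (lp ++ ([Sum.inl (i, j), Sum.inr (Sum.inl (j, k))] : List (GG).E)).getLast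
              hne = Sum.inr (Sum.inl (j, k)) := getLast_app2 _ _ _ _
          rw [hv, hgl]
          rfl
        · show ((lp ++ ([Sum.inl (i, j), Sum.inr (Sum.inl (j, k))] : List (GG).E)).map l).prod = _
          rw [List.map_append, List.prod_append]
          have h1 : (lp.map l).prod = 1 := prod_loops lp hlp
          rw [h1, one_mul]
          show l _ * (l _ * 1) = _
          rw [mul_one]
  · -- p = [b(j,k)]
    rcases hends with ⟨habs, _⟩ | ⟨hne, hu, hv⟩
    · simp at habs
    · right; right; right
      refine ⟨j, k, hu, hv, ?_⟩
      show (List.map l [Sum.inr (Sum.inl (j, k))]).prod = _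
      exact mul_one _

lemma master {M : Type} [Monoid M] (l : (GG).E → M)
    (ha : ∀ x, l (Sum.inr (Sum.inr x)) = 1)
    (hb : ∀ (i : Fin n₁) (j j' : Fin n₂) (k : Fin n₃),
      l (Sum.inl (i, j)) * l (Sum.inr (Sum.inl (j, k)))
        = l (Sum.inl (i, j')) * l (Sum.inr (Sum.inl (j', k)))) :
    (GG).IsCommutative l := by
  intro u v p q hp hq
  rcases path_label hn₁ hm' hm0 l ha hp with
    ⟨he1, hl1⟩ | ⟨i1, j1, hu1, hv1, hl1⟩ | ⟨i1, k1, j1, hu1, hv1, hl1⟩ | ⟨j1, k1, hu1, hv1, hl1⟩ <;>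
  rcases path_label hn₁ hm' hm0 l ha hq with
    ⟨he2, hl2⟩ | ⟨i2, j2, hu2, hv2, hl2⟩ | ⟨i2, k2, j2, hu2, hv2, hl2⟩ | ⟨j2, k2, hu2, hv2, hl2⟩
  · rw [hl1, hl2]
  · exact absurd ((hu2.symm.trans he1).trans hv2) (fun h => vU_ne_vV h)
  · exact absurd ((hu2.symm.trans he1).trans hv2) (fun h => vU_ne_vW h)
  · exact absurd ((hu2.symm.trans he1).trans hv2) (fun h => vV_ne_vW h)
  · exact absurd ((hu1.symm.trans he2).trans hv1) (fun h => vU_ne_vV h)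
  · have hi : i1 = i2 := vU_inj (hu1.symm.trans hu2)
    have hj : j1 = j2 := vV_inj (hv1.symm.trans hv2)
    rw [hl1, hl2, hi, hj]
  · exact absurd (hv1.symm.trans hv2) (fun h => vV_ne_vW h)
  · exact absurd (hu1.symm.trans hu2) (fun h => vU_ne_vV h)
  · exact absurd ((hu1.symm.trans he2).trans hv1) (fun h => vU_ne_vW h)
  · exact absurd (hv1.symm.trans hv2) (fun h => vW_ne_vV h)
  · have hi : i1 = i2 := vU_inj (hu1.symm.trans hu2)
    have hk : k1 = k2 := vW_inj (hv1.symm.trans hv2)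
    rw [hl1, hl2, hi, hk]
    exact hb i2 j1 j2 k2
  · exact absurd (hu1.symm.trans hu2) (fun h => vU_ne_vV h)
  · exact absurd ((hu1.symm.trans he2).trans hv1) (fun h => vV_ne_vW h)
  · exact absurd (hu1.symm.trans hu2) (fun h => vV_ne_vU h)
  · exact absurd (hu1.symm.trans hu2) (fun h => vV_ne_vU h)
  · have hj : j1 = j2 := vV_inj (hu1.symm.trans hu2)
    have hk : k1 = k2 := vW_inj (hv1.symm.trans hv2)
    rw [hl1, hl2, hj, hk]

lemma isPath_nil (u : (GG).V) : (GG).IsPath [] u u :=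
  ⟨List.isChain_nil, Or.inl ⟨rfl, rfl⟩⟩

lemma isPath_loop (x : Fin (m - n₂ * (n₁ + n₃))) :
    (GG).IsPath [Sum.inr (Sum.inr x)] (Sum.inr (Sum.inl ⟨0, hn₁⟩))
      (Sum.inr (Sum.inl ⟨0, hn₁⟩)) :=
  ⟨List.isChain_singleton _, Or.inr ⟨by simp, rfl, rfl⟩⟩

lemma isPath_ab (i : Fin n₁) (j : Fin n₂) (k : Fin n₃) :
    (GG).IsPath [Sum.inl (i, j), Sum.inr (Sum.inl (j, k))]
      (Sum.inr (Sum.inl i)) (Sum.inr (Sum.inr (Sum.inr k))) :=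
  ⟨List.isChain_pair.mpr rfl, Or.inr ⟨by simp, rfl, rfl⟩⟩

lemma labelProd_nil {M : Type} [Monoid M] (l : (GG).E → M) :
    (GG).labelProd l [] = 1 := rfl

lemma labelProd_single {M : Type} [Monoid M] (l : (GG).E → M) (e : (GG).E) :
    (GG).labelProd l [e] = l e := by
  show (List.map l [e]).prod = l e
  simp

lemma labelProd_pair {M : Type} [Monoid M] (l : (GG).E → M) (e f : (GG).E) :
    (GG).labelProd l [e, f] = l e * l f := by
  show (List.map l [e, f]).prod = l e * l f
  simp

lemma exists_complete (hn₂ : 0 < n₂) :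
    ∃ R : Finset (List (GG).E × List (GG).E), (GG).IsComplete R := by
  classical
  refine ⟨(Finset.univ.image fun x : Fin (m - n₂ * (n₁ + n₃)) =>
      (([Sum.inr (Sum.inr x)] : List (GG).E), ([] : List (GG).E))) ∪
    (Finset.univ.image fun y : Fin n₁ × Fin n₂ × Fin n₃ =>
      (([Sum.inl (y.1, y.2.1), Sum.inr (Sum.inl (y.2.1, y.2.2))] : List (GG).E),
        ([Sum.inl (y.1, ⟨0, hn₂⟩), Sum.inr (Sum.inl (⟨0, hn₂⟩, y.2.2))] : List (GG).E))), ?_⟩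
  intro M _ l
  constructor
  · intro hcomm r hr
    rcases Finset.mem_union.mp hr with h | h
    · obtain ⟨x, _, rfl⟩ := Finset.mem_image.mp h
      exact hcomm _ _ _ _ (isPath_loop hn₁ hm' hm0 x) (isPath_nil hn₁ hm' hm0 _)
    · obtain ⟨y, _, rfl⟩ := Finset.mem_image.mp h
      exact hcomm _ _ _ _ (isPath_ab hn₁ hm' hm0 y.1 y.2.1 y.2.2)
        (isPath_ab hn₁ hm' hm0 y.1 ⟨0, hn₂⟩ y.2.2)
  · intro hrel
    apply master hn₁ hm' hm0 l
    · intro x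
      have h := hrel _ (Finset.mem_union_left _
        (Finset.mem_image_of_mem _ (Finset.mem_univ x)))
      erw [labelProd_single hn₁ hm' hm0, labelProd_nil hn₁ hm' hm0] at h
      exact h
    · intro i j j' k
      have h1 := hrel _ (Finset.mem_union_right _
        (Finset.mem_image_of_mem _ (Finset.mem_univ (i, j, k))))
      have h2 := hrel _ (Finset.mem_union_right _
        (Finset.mem_image_of_mem _ (Finset.mem_univ (i, j', k))))
      erw [labelProd_pair hn₁ hm' hm0, labelProd_pair hn₁ hm' hm0] at h1 h2
      exact h1.trans h2.symm

lemma zmod2_eq_of_add_eq_zero : ∀ a b : ZMod 2, a + b = 0 → a = b := by decide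

/-- loop-count labeling function. -/
def gfun (ψ : Fin (m - n₂ * (n₁ + n₃)) → ZMod 2) : (GG).E → ZMod 2
  | .inr (.inr x) => ψ x
  | _ => 0

lemma gfun_add (ψ ψ' : Fin (m - n₂ * (n₁ + n₃)) → ZMod 2) (e : (GG).E) :
    gfun hn₁ hm' hm0 (ψ + ψ') e = gfun hn₁ hm' hm0 ψ e + gfun hn₁ hm' hm0 ψ' e := by
  rcases e with x | x | x <;> simp [gfun]

lemma gfun_smul (c : ZMod 2) (ψ : Fin (m - n₂ * (n₁ + n₃)) → ZMod 2) (e : (GG).E) :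
    gfun hn₁ hm' hm0 (c • ψ) e = c * gfun hn₁ hm' hm0 ψ e := by
  rcases e with x | x | x <;> simp [gfun]

lemma listsum_add {α : Type} (f g : α → ZMod 2) (s : List α) :
    (s.map (fun e => f e + g e)).sum = (s.map f).sum + (s.map g).sum := by
  induction s with
  | nil => simp
  | cons e t ih => simp [ih]; ring

lemma listsum_smul {α : Type} (c : ZMod 2) (f : α → ZMod 2) (s : List α) :
    (s.map (fun e => c * f e)).sum = c * (s.map f).sum := by
  induction s with
  | nil => simp
  | cons e t ih => simp [ih]; ring

lemma card_lower_bound (hn₂ : 0 < n₂) (R : Finset (List (GG).E × List (GG).E))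
    (hR : (GG).IsComplete R) :
    n₁ * n₃ * n₂ ≤ R.card + n₁ * n₃ ∧ m - n₂ * (n₁ + n₃) ≤ R.card := by
  classical
  constructor
  · -- main bound via the adjacency monoid
    set Ω := (Fin n₁ × Fin n₃ × Fin n₂ → ZMod 2)
    let T1 : Ω →ₗ[ZMod 2] (↥R → ZMod 2) :=
      { toFun := fun φ r => adjSum φ (r.val.1.filter nL) + adjSum φ (r.val.2.filter nL)
        map_add' := by
          intro φ ψ
          funext r
          show adjSum (φ + ψ) _ + adjSum (φ + ψ) _ = _
          rw [adjSum_add, adjSum_add]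
          show _ = (adjSum φ _ + adjSum φ _) + (adjSum ψ _ + adjSum ψ _)
          ring
        map_smul' := by
          intro c φ
          funext r
          show adjSum (c • φ) _ + adjSum (c • φ) _ = _
          rw [adjSum_smul, adjSum_smul]
          show _ = c • (adjSum φ _ + adjSum φ _)
          rw [smul_eq_mul]
          ring }
    -- relations hold for the zero labeling (it is commutative)
    have hcomm0 : (GG).IsCommutative (lab1 (0 : Ω)) := by
      apply master hn₁ hm' hm0
      · intro x; rfl
      · intro i j j' k
        show AdjM.el _ _ _ * AdjM.el _ _ _ = AdjM.el _ _ _ * AdjM.el _ _ _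
        rw [AdjM.el_mul_el, AdjM.el_mul_el, κφ_zero, κφ_zero]
    have hold0 : ∀ r ∈ R, (GG).labelProd (lab1 (0 : Ω)) r.1 =
        (GG).labelProd (lab1 (0 : Ω)) r.2 := (hR _ (lab1 (0 : Ω))).mp hcomm0
    -- the kernel of T1 consists of functions constant in the third coordinate
    have hker : ∀ φ : Ω, T1 φ = 0 → ∀ i k j, φ (i, k, j) = φ (i, k, ⟨0, hn₂⟩) := by
      intro φ hφ i k j
      have hrel : ∀ r ∈ R, (GG).labelProd (lab1 φ) r.1 = (GG).labelProd (lab1 φ) r.2 := by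
        intro r hr
        have h0 := hold0 r hr
        have hz : adjSum φ (r.1.filter nL) = adjSum φ (r.2.filter nL) := by
          apply zmod2_eq_of_add_eq_zero
          exact congrFun hφ ⟨r, hr⟩
        show (r.1.map (lab1 φ)).prod = (r.2.map (lab1 φ)).prod
        rw [prod_lab1_filter φ r.1, prod_lab1_filter φ r.2]
        have h0' : ((r.1.filter nL).map (lab1 (0 : Ω))).prod =
            ((r.2.filter nL).map (lab1 (0 : Ω))).prod := by
          have h : (r.1.map (lab1 (0 : Ω))).prod = (r.2.map (lab1 (0 : Ω))).prod := h0
          rwa [prod_lab1_filter (0 : Ω) r.1, prod_lab1_filter (0 : Ω) r.2] at h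
        by_cases h1 : r.1.filter nL = []
        · by_cases h2 : r.2.filter nL = []
          · rw [h1, h2]
          · exfalso
            rw [h1] at h0'
            rw [prod_lab1 (0 : Ω) _ (fun e he => List.of_mem_filter he) h2] at h0'
            exact AdjM.el_ne_one _ _ _ h0'.symm
        · by_cases h2 : r.2.filter nL = []
          · exfalso
            rw [h2] at h0'
            rw [prod_lab1 (0 : Ω) _ (fun e he => List.of_mem_filter he) h1] at h0'
            exact AdjM.el_ne_one _ _ _ h0'
          · rw [prod_lab1 (0 : Ω) _ (fun e he => List.of_mem_filter he) h1,
              prod_lab1 (0 : Ω) _ (fun e he => List.of_mem_filter he) h2] at h0'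
            rw [prod_lab1 φ _ (fun e he => List.of_mem_filter he) h1,
              prod_lab1 φ _ (fun e he => List.of_mem_filter he) h2]
            rw [AdjM.el_inj] at h0' ⊢
            exact ⟨h0'.1, h0'.2.1, hz⟩
      have hcommφ : (GG).IsCommutative (lab1 φ) := (hR _ (lab1 φ)).mpr hrel
      have := hcommφ _ _ _ _ (isPath_ab hn₁ hm' hm0 i j k)
        (isPath_ab hn₁ hm' hm0 i ⟨0, hn₂⟩ k)
      erw [labelProd_pair hn₁ hm' hm0, labelProd_pair hn₁ hm' hm0] at this
      have h3 : (AdjM.el (some (Sum.inl i)) (some (Sum.inl (i, j))) 0 :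
            AdjM (Option (Fin n₁ ⊕ (Fin n₂ × Fin n₃))) (Option ((Fin n₁ × Fin n₂) ⊕ Fin n₃))
              (κφ φ)) * AdjM.el (some (Sum.inr (j, k))) (some (Sum.inr k)) 0 =
          (AdjM.el (some (Sum.inl i)) (some (Sum.inl (i, ⟨0, hn₂⟩))) 0 :
            AdjM (Option (Fin n₁ ⊕ (Fin n₂ × Fin n₃))) (Option ((Fin n₁ × Fin n₂) ⊕ Fin n₃))
              (κφ φ)) * AdjM.el (some (Sum.inr (⟨0, hn₂⟩, k))) (some (Sum.inr k)) 0 := this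
      rw [AdjM.el_mul_el, AdjM.el_mul_el, AdjM.el_inj] at h3
      have h4 := h3.2.2
      simpa [κφ] using h4
    -- now the dimension count
    have hrange : Module.finrank (ZMod 2) (LinearMap.range T1) ≤ R.card := by
      calc Module.finrank (ZMod 2) (LinearMap.range T1)
          ≤ Module.finrank (ZMod 2) (↥R → ZMod 2) := Submodule.finrank_le _
        _ = R.card := by rw [Module.finrank_pi, Fintype.card_coe]
    have hkerrank : Module.finrank (ZMod 2) (LinearMap.ker T1) ≤ n₁ * n₃ := by
      let g3 : (LinearMap.ker T1) →ₗ[ZMod 2] ((Fin n₁ × Fin n₃) → ZMod 2) :=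
        { toFun := fun φ ik => (φ : Ω) (ik.1, ik.2, ⟨0, hn₂⟩)
          map_add' := fun _ _ => rfl
          map_smul' := fun _ _ => rfl }
      have hg3 : Function.Injective g3 := by
        intro φ ψ h
        ext x
        obtain ⟨i, k, j⟩ := x
        have h1 := hker φ.1 (LinearMap.mem_ker.mp φ.2) i k j
        have h2 := hker ψ.1 (LinearMap.mem_ker.mp ψ.2) i k j
        rw [h1, h2]
        exact congrFun h (i, k)
      calc Module.finrank (ZMod 2) (LinearMap.ker T1)
          ≤ Module.finrank (ZMod 2) ((Fin n₁ × Fin n₃) → ZMod 2) :=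
            LinearMap.finrank_le_finrank_of_injective hg3
        _ = n₁ * n₃ := by
            rw [Module.finrank_pi]
            simp [Fintype.card_prod]
    have hdom : Module.finrank (ZMod 2) Ω = n₁ * n₃ * n₂ := by
      rw [Module.finrank_pi]
      simp [Fintype.card_prod, mul_assoc]
    have := LinearMap.finrank_range_add_finrank_ker T1
    rw [hdom] at this
    omega
  · -- loop bound
    let T2 : (Fin (m - n₂ * (n₁ + n₃)) → ZMod 2) →ₗ[ZMod 2] (↥R → ZMod 2) :=
      { toFun := fun ψ r => ((r.val.1.map (gfun hn₁ hm' hm0 ψ)).sum +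
          (r.val.2.map (gfun hn₁ hm' hm0 ψ)).sum)
        map_add' := by
          intro ψ ψ'
          funext r
          show (r.val.1.map (gfun hn₁ hm' hm0 (ψ + ψ'))).sum +
            (r.val.2.map (gfun hn₁ hm' hm0 (ψ + ψ'))).sum = (_ + _) + (_ + _)
          rw [show r.val.1.map (gfun hn₁ hm' hm0 (ψ + ψ')) =
              r.val.1.map (fun e => gfun hn₁ hm' hm0 ψ e + gfun hn₁ hm' hm0 ψ' e) from
              List.map_congr_left (fun e _ => gfun_add hn₁ hm' hm0 ψ ψ' e),
            show r.val.2.map (gfun hn₁ hm' hm0 (ψ + ψ')) =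
              r.val.2.map (fun e => gfun hn₁ hm' hm0 ψ e + gfun hn₁ hm' hm0 ψ' e) from
              List.map_congr_left (fun e _ => gfun_add hn₁ hm' hm0 ψ ψ' e),
            listsum_add, listsum_add]
          ring
        map_smul' := by
          intro c ψ
          funext r
          show (r.val.1.map (gfun hn₁ hm' hm0 (c • ψ))).sum +
            (r.val.2.map (gfun hn₁ hm' hm0 (c • ψ))).sum = c • (_ + _)
          rw [show r.val.1.map (gfun hn₁ hm' hm0 (c • ψ)) =
              r.val.1.map (fun e => c * gfun hn₁ hm' hm0 ψ e) from
              List.map_congr_left (fun e _ => gfun_smul hn₁ hm' hm0 c ψ e),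
            show r.val.2.map (gfun hn₁ hm' hm0 (c • ψ)) =
              r.val.2.map (fun e => c * gfun hn₁ hm' hm0 ψ e) from
              List.map_congr_left (fun e _ => gfun_smul hn₁ hm' hm0 c ψ e),
            listsum_smul, listsum_smul, smul_eq_mul]
          ring }
    have hker2 : LinearMap.ker T2 = ⊥ := by
      rw [LinearMap.ker_eq_bot']
      intro ψ hψ
      have hrel : ∀ r ∈ R, (GG).labelProd
          (fun e => Multiplicative.ofAdd (gfun hn₁ hm' hm0 ψ e)) r.1 =
          (GG).labelProd (fun e => Multiplicative.ofAdd (gfun hn₁ hm' hm0 ψ e)) r.2 := by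
        intro r hr
        show (r.1.map _).prod = (r.2.map _).prod
        rw [prod_ofAdd, prod_ofAdd]
        congr 1
        apply zmod2_eq_of_add_eq_zero
        exact congrFun hψ ⟨r, hr⟩
      have hcomm := (hR _ _).mpr hrel
      funext x
      have := hcomm _ _ _ _ (isPath_loop hn₁ hm' hm0 x) (isPath_nil hn₁ hm' hm0 _)
      erw [labelProd_single hn₁ hm' hm0, labelProd_nil hn₁ hm' hm0] at this
      show ψ x = 0
      exact (by simpa using congrArg Multiplicative.toAdd this :
        gfun hn₁ hm' hm0 ψ (Sum.inr (Sum.inr x)) = 0)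
    have hrange : Module.finrank (ZMod 2) (LinearMap.range T2) ≤ R.card := by
      calc Module.finrank (ZMod 2) (LinearMap.range T2)
          ≤ Module.finrank (ZMod 2) (↥R → ZMod 2) := Submodule.finrank_le _
        _ = R.card := by rw [Module.finrank_pi, Fintype.card_coe]
    have hdom : Module.finrank (ZMod 2) (Fin (m - n₂ * (n₁ + n₃)) → ZMod 2) =
        m - n₂ * (n₁ + n₃) := by
      rw [Module.finrank_pi]
      simp
    have := LinearMap.finrank_range_add_finrank_ker T2
    rw [hker2, finrank_bot, add_zero, hdom] at this
    omega


lemma eta_bound (hn₂ : 0 < n₂) :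
    n₁ * n₃ * n₂ ≤ (GG).eta + n₁ * n₃ ∧ m - n₂ * (n₁ + n₃) ≤ (GG).eta := by
  obtain ⟨R₀, hR₀⟩ := exists_complete hn₁ hm' hm0 hn₂
  have hmem : (GG).eta ∈ {k : ℕ | ∃ R : Finset (List (GG).E × List (GG).E),
      (GG).IsComplete R ∧ R.card = k} := Nat.sInf_mem ⟨R₀.card, R₀, hR₀, rfl⟩
  obtain ⟨R, hR, hcard⟩ := hmem
  have hb := card_lower_bound hn₁ hm' hm0 hn₂ R hR
  rw [← hcard]
  exact hb

lemma cardV : Fintype.card (GG).V = n₀ + (n₁ + (n₂ + n₃)) := by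
  show Fintype.card (Fin n₀ ⊕ (Fin n₁ ⊕ (Fin n₂ ⊕ Fin n₃))) = _
  simp

lemma cardE : Fintype.card (GG).E = n₁ * n₂ + (n₂ * n₃ + (m - n₂ * (n₁ + n₃))) := by
  show Fintype.card ((Fin n₁ × Fin n₂) ⊕ ((Fin n₂ × Fin n₃) ⊕ Fin (m - n₂ * (n₁ + n₃)))) = _
  simp

end Graph
end TriProof

lemma arith_tri (n m t q n2 η r : ℕ)
    (hn : 4 ≤ n) (hm : 4 ≤ m)
    (hl : 4 * t ≤ min n m) (hu : min n m ≤ 7 * t) (ht1 : 1 ≤ t)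
    (hq : 2 * (t * q) + r = m) (hr : r < 2 * t)
    (hn2 : n2 = min q (n - 2 * t))
    (hA : t * t * n2 ≤ η + t * t) (hB : m ≤ η + n2 * (t + t)) :
    min (n ^ 2) m * min n m + m ≤ 2 ^ 14 * η := by
  have hμn : min n m ≤ n := min_le_left _ _
  have hμm : min n m ≤ m := min_le_right _ _
  have hM2m : min (n ^ 2) m ≤ m := min_le_right _ _
  have hM2n : min (n ^ 2) m ≤ n ^ 2 := min_le_left _ _
  have h2tn : 2 * t ≤ n := by omega
  rcases le_or_gt q (n - 2 * t) with hcase | hcase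
  · -- n2 = q
    have hn2q : n2 = q := by rw [hn2]; omega
    subst hn2q
    have hq2 : 2 ≤ n2 := by
      by_contra h
      push_neg at h
      have h3 : t * n2 ≤ t * 1 := Nat.mul_le_mul_left _ (by omega)
      omega
    have eA : t * t * n2 = t * t * (n2 - 1) + t * t := by
      have h5 : n2 - 1 + 1 = n2 := by omega
      calc t * t * n2 = t * t * ((n2 - 1) + 1) := by rw [h5]
        _ = t * t * (n2 - 1) + t * t := by ring
    have hA' : t * t * (n2 - 1) ≤ η := by omega
    rcases lt_or_ge m (8 * t) with h8 | h8
    · -- small m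
      have htt1 : t * t * 1 ≤ t * t * (n2 - 1) := Nat.mul_le_mul_left _ (by omega)
      have htt : t ≤ t * t := by
        calc t = t * 1 := (Nat.mul_one t).symm
          _ ≤ t * t := Nat.mul_le_mul_left _ ht1
      have hLHS : min (n ^ 2) m * min n m + m ≤ 8 * t * (7 * t) + 8 * t :=
        Nat.add_le_add (Nat.mul_le_mul (by omega) hu) (by omega)
      have e2 : 8 * t * (7 * t) = 56 * (t * t) := by ring
      omega
    · -- large m
      have hq4 : 4 ≤ n2 := by
        by_contra h
        push_neg at h
        have h3 : t * n2 ≤ t * 3 := Nat.mul_le_mul_left _ (by omega)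
        omega
      have e3 : 3 * m ≤ 8 * (t * n2) := by omega
      have e4 : 3 * n2 ≤ 4 * (n2 - 1) := by omega
      have e5 : t * t * (3 * n2) ≤ t * t * (4 * (n2 - 1)) := Nat.mul_le_mul_left _ e4
      have e6 : t * t * (3 * n2) = 3 * (t * (t * n2)) := by ring
      have e7 : t * t * (4 * (n2 - 1)) = 4 * (t * t * (n2 - 1)) := by ring
      have e8 : 3 * t * (3 * m) ≤ 3 * t * (8 * (t * n2)) := Nat.mul_le_mul_left _ e3
      have e9 : 3 * t * (3 * m) = 9 * (t * m) := by ring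
      have e10 : 3 * t * (8 * (t * n2)) = 8 * (3 * (t * (t * n2))) := by ring
      have e12 : 9 * (t * m) ≤ 32 * η := by omega
      have hLHS1 : min (n ^ 2) m * min n m ≤ m * (7 * t) := Nat.mul_le_mul hM2m hu
      have e11 : m * (7 * t) = 7 * (t * m) := by ring
      have e13 : m ≤ t * m := by
        calc m = 1 * m := (Nat.one_mul m).symm
          _ ≤ t * m := Nat.mul_le_mul_right _ ht1
      omega
  · -- n2 = n - 2*t
    have hn2d : n2 = n - 2 * t := by rw [hn2]; omega
    have hsum : 2 * t + n2 = n := by omega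
    have h2t2 : 2 * t ≤ n2 := by omega
    have hn22 : 2 ≤ n2 := by omega
    have e1 : t * n2 ≤ t * q := Nat.mul_le_mul_left _ (by omega)
    have hmq : 2 * (t * n2) ≤ m := by omega
    have en2 : n2 ≤ t * n2 := by
      calc n2 = 1 * n2 := (Nat.one_mul n2).symm
        _ ≤ t * n2 := Nat.mul_le_mul_right _ ht1
    have hmn : n ≤ m := by omega
    have hμ : min n m = n := min_eq_left hmn
    have hn7 : n ≤ 7 * t := by omega
    have eA : t * t * n2 = t * t * (n2 - 1) + t * t := by
      have h5 : n2 - 1 + 1 = n2 := by omega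
      calc t * t * n2 = t * t * ((n2 - 1) + 1) := by rw [h5]
        _ = t * t * (n2 - 1) + t * t := by ring
    have hA' : t * t * (n2 - 1) ≤ η := by omega
    have e14 : t * t * n2 ≤ t * t * (2 * (n2 - 1)) := Nat.mul_le_mul_left _ (by omega)
    have e15 : t * t * (2 * (n2 - 1)) = 2 * (t * t * (n2 - 1)) := by ring
    have e16 : t * t * n2 ≤ 2 * η := by omega
    have hcube0 : n ^ 2 * n ≤ (7 * t) * (7 * t) * (2 * n2) := by
      have h17 : n ^ 2 * n = n * n * n := by ring
      rw [h17]
      exact Nat.mul_le_mul (Nat.mul_le_mul hn7 hn7) (by omega)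
    have e18 : (7 * t) * (7 * t) * (2 * n2) = 98 * (t * t * n2) := by ring
    have hcube : n ^ 2 * n ≤ 196 * η := by omega
    have e20 : n2 * (2 * t) ≤ n2 * n := Nat.mul_le_mul_left _ h2tn
    have e21 : n2 * n ≤ n * n := Nat.mul_le_mul_right _ (by omega)
    have e22 : n * n = n ^ 2 := by ring
    have e23 : n2 * (t + t) = n2 * (2 * t) := by ring
    have hmb : m ≤ η + n ^ 2 := by omega
    have hLHS : min (n ^ 2) m * min n m ≤ n ^ 2 * n := by
      rw [hμ]
      exact Nat.mul_le_mul_right _ hM2n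
    have e24 : n ^ 2 * 1 ≤ n ^ 2 * n := Nat.mul_le_mul_left _ (by omega)
    omega

/-- Theorem (lower bound on commutativity rank): for any `n, m ≥ 4` there is a graph
with `n` vertices and `m` edges such that
`η(G) ≥ 2⁻¹⁴ · (min(|V|², |E|) · min(|V|, |E|) + |E|)`. -/
theorem eta_lower_bound (n m : ℕ) (hn : 4 ≤ n) (hm : 4 ≤ m) :
    ∃ G : OrientedGraph, Fintype.card G.V = n ∧ Fintype.card G.E = m ∧
      min (Fintype.card G.V ^ 2) (Fintype.card G.E) *
          min (Fintype.card G.V) (Fintype.card G.E) + Fintype.card G.E ≤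
        2 ^ 14 * G.eta := by
  have hmin4 : 4 ≤ min n m := le_min hn hm
  have hminn : min n m ≤ n := min_le_left _ _
  have hminm : min n m ≤ m := min_le_right _ _
  set t := min n m / 4 with htdef
  have hl : 4 * t ≤ min n m := by omega
  have hu4 : min n m < 4 * t + 4 := by omega
  have ht1 : 1 ≤ t := by omega
  have ht0 : 0 < t := ht1
  have h2tpos : 0 < 2 * t := by omega
  set q := m / (2 * t) with hqdef
  have hq0 : 2 * t * q + m % (2 * t) = m := Nat.div_add_mod m (2 * t)
  have hq : 2 * (t * q) + m % (2 * t) = m := by rw [← mul_assoc]; exact hq0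
  have hrlt : m % (2 * t) < 2 * t := Nat.mod_lt _ h2tpos
  have h2tn : 2 * t ≤ n := by omega
  set n2 := min q (n - 2 * t) with hn2def
  have hn2q : n2 ≤ q := min_le_left _ _
  have hn2d : n2 ≤ n - 2 * t := min_le_right _ _
  have hqge2 : 2 ≤ q := by
    by_contra h
    push_neg at h
    have h3 : t * q ≤ t * 1 := Nat.mul_le_mul_left _ (by omega)
    omega
  have hn2pos : 0 < n2 := by
    rw [hn2def]
    have : 0 < n - 2 * t := by omega
    omega
  have hhe : n2 * (t + t) ≤ m := by
    have e1 : t * n2 ≤ t * q := Nat.mul_le_mul_left _ hn2q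
    have e2 : n2 * (t + t) = 2 * (t * n2) := by ring
    omega
  have hm0 : 0 < m := by omega
  set n0 := n - (2 * t + n2) with hn0def
  have hVn : Fintype.card (Triploid t n2 t n0 m ht0 hhe hm0).V = n := by
    rw [TriProof.cardV ht0 hhe hm0]
    omega
  have hEm : Fintype.card (Triploid t n2 t n0 m ht0 hhe hm0).E = m := by
    rw [TriProof.cardE ht0 hhe hm0]
    have e3 : n2 * (t + t) = t * n2 + n2 * t := by ring
    omega
  refine ⟨Triploid t n2 t n0 m ht0 hhe hm0, hVn, hEm, ?_⟩
  rw [hVn, hEm]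
  obtain ⟨hA, hB⟩ := TriProof.eta_bound ht0 hhe hm0 hn2pos
  exact arith_tri n m t q n2 _ (m % (2 * t)) hn hm hl (by omega) ht1 hq hrlt hn2def
    hA (by omega)
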